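/- Let N ≥ 2, and let m_0, m_1, …, m_{N−1} ∈ L^∞(𝕋) be such that for almost every z ∈ 𝕋 the N×N complex matrix (1/√N)·( m_j(e^{2πik/N} z) )_{j,k=0}^{N−1} is unitary. Define operators S_j on L²(𝕋) by (S_j f)(z) = m_j(z) f(z^N). Then the S_j are bounded operators satisfying the Cuntz relations: S_j* S_k = δ_{j,k} · Id for all j,k ∈ {0,…,N−1}, and Σ_{j=0}^{N−1} S_j S_j* = Id. -/

import Mathlib

open MeasureTheory Complex Real
open scoped ComplexConjugate
open scoped InnerProductSpace
open scoped ENNReal NNReal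

noncomputable section

instance : Fact (0 < 2 * π) := ⟨by positivity⟩

namespace Stmt5Aux

/-- The point `2πl/N` on the circle `ℝ/2πℤ`. -/
def sc (N l : ℕ) : AddCircle (2 * π) := ((2 * π * l / N : ℝ) : AddCircle (2 * π))

lemma sc_zero (N : ℕ) : sc N 0 = 0 := by
  simp [sc]

lemma sc_add (N a b : ℕ) : sc N (a + b) = sc N a + sc N b := by
  show ((2 * π * ((a : ℕ) + b : ℕ) / N : ℝ) : AddCircle (2 * π)) = _
  have h : (2 * π * ((a + b : ℕ) : ℝ) / N : ℝ) = 2 * π * a / N + 2 * π * b / N := by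
    push_cast; ring
  rw [h]; rfl

lemma sc_N (N : ℕ) (hN : N ≠ 0) : sc N N = 0 := by
  have hN' : (N : ℝ) ≠ 0 := Nat.cast_ne_zero.mpr hN
  have h : (2 * π * (N : ℕ) / N : ℝ) = 2 * π := by field_simp
  show ((2 * π * (N : ℕ) / N : ℝ) : AddCircle (2 * π)) = 0
  rw [h]
  exact AddCircle.coe_period (2 * π)

lemma sc_nmul (N q : ℕ) (hN : N ≠ 0) : sc N (N * q) = 0 := by
  induction q with
  | zero => simpa using sc_zero N
  | succ q ih => rw [Nat.mul_succ, sc_add, ih, sc_N N hN, add_zero]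

lemma sc_mod (N a : ℕ) (hN : N ≠ 0) : sc N (a % N) = sc N a := by
  conv_rhs => rw [← Nat.div_add_mod a N]
  rw [sc_add, sc_nmul N _ hN, zero_add]

lemma smul_sc (N n a : ℕ) : n • sc N a = sc N (n * a) := by
  induction n with
  | zero => simp [sc_zero]
  | succ n ih => rw [succ_nsmul, ih, Nat.succ_mul, sc_add]

lemma nsmul_sc (N a : ℕ) (hN : N ≠ 0) : N • sc N a = 0 := by
  rw [smul_sc, sc_nmul N a hN]

lemma neg_sc (N a : ℕ) (ha : a ≤ N) (hN : N ≠ 0) : -(sc N a) = sc N (N - a) := by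
  apply neg_eq_of_add_eq_zero_right
  rw [← sc_add, Nat.add_sub_cancel' ha, sc_N N hN]

lemma coeFn_sum {ι : Type*} (s : Finset ι)
    (f : ι → Lp ℂ 2 (volume : Measure (AddCircle (2 * π)))) :
    ⇑(∑ i ∈ s, f i) =ᵐ[volume] fun t => ∑ i ∈ s, f i t := by
  classical
  induction s using Finset.induction with
  | empty =>
      simp only [Finset.sum_empty]
      exact Lp.coeFn_zero ℂ 2 _
  | @insert a s ha ih =>
      rw [Finset.sum_insert ha]
      refine (Lp.coeFn_add _ _).trans ?_
      filter_upwards [ih] with t ht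
      rw [Pi.add_apply, ht, Finset.sum_insert ha]

set_option maxHeartbeats 1000000 in
/-- A function in `L²(𝕋)` which is a.e. invariant under all translations by
`2πk/N` descends through the `N`-fold covering map `t ↦ N • t`. -/
lemma descend (N : ℕ) (hN : 2 ≤ N) (w : AddCircle (2 * π) → ℂ)
    (hw : MemLp w 2 (volume : Measure (AddCircle (2 * π))))
    (hinv : ∀ k : ℕ, (fun t => w (t + sc N k)) =ᵐ[volume] w) :
    ∃ f : Lp ℂ 2 (volume : Measure (AddCircle (2 * π))),
      (fun t => (f : AddCircle (2 * π) → ℂ) (N • t)) =ᵐ[(volume : Measure (AddCircle (2 * π)))] w := by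
  have hNne : N ≠ 0 := by omega
  have hNR : (0 : ℝ) < N := by exact_mod_cast Nat.pos_of_ne_zero hNne
  have h2π : (0 : ℝ) < 2 * π := by positivity
  have hT : MeasurePreserving (fun t : AddCircle (2 * π) => N • t) volume volume :=
    (AddCircle.ergodic_nsmul (T := 2 * π) (by omega : 1 < N)).toMeasurePreserving
  set w' := hw.1.mk w with hw'def
  have hw's : StronglyMeasurable w' := hw.1.stronglyMeasurable_mk
  have hww' : w =ᵐ[volume] w' := hw.1.ae_eq_mk
  set fraw : AddCircle (2 * π) → ℂ :=
    fun s => w' ((((AddCircle.equivIco (2 * π) 0 s : ℝ) / N : ℝ) : AddCircle (2 * π)))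
    with hfrawdef
  have hrepm : Measurable fun s : AddCircle (2 * π) => (AddCircle.equivIco (2 * π) 0 s : ℝ) :=
    measurable_subtype_coe.comp (AddCircle.measurableEquivIco (2 * π) 0).measurable
  have hfm : AEStronglyMeasurable fraw volume := by
    apply StronglyMeasurable.aestronglyMeasurable
    exact hw's.comp_measurable
      (((AddCircle.continuous_mk' (2 * π)).measurable).comp (hrepm.div_const N))
  -- key pointwise identity
  have key : ∀ t : AddCircle (2 * π), ∃ a : ℕ, a ≤ N ∧ fraw (N • t) = w' (t + sc N a) := by
    intro t
    set y : ℝ := (AddCircle.equivIco (2 * π) 0 t : ℝ) with hydef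
    have hy : y ∈ Set.Ico (0 : ℝ) (2 * π) := by
      simpa using (AddCircle.equivIco (2 * π) 0 t).2
    have hty : ((y : ℝ) : AddCircle (2 * π)) = t :=
      (AddCircle.equivIco (2 * π) 0).symm_apply_apply t
    have hNy : N • t = ((N * y : ℝ) : AddCircle (2 * π)) := by
      rw [← hty]
      have : ((N • y : ℝ) : AddCircle (2 * π)) = N • ((y : ℝ) : AddCircle (2 * π)) :=
        map_nsmul (QuotientAddGroup.mk' (AddSubgroup.zmultiples (2 * π))) N y
      rw [← this, nsmul_eq_mul]
    set k : ℤ := ⌊(N * y) / (2 * π)⌋ with hkdef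
    have hq0 : 0 ≤ (N * y) / (2 * π) := by
      have := hy.1
      positivity
    have hk0 : 0 ≤ k := Int.floor_nonneg.2 hq0
    have hkN : k < (N : ℤ) := by
      apply Int.floor_lt.2
      have : N * y < N * (2 * π) := by
        have := hy.2
        nlinarith
      rw [div_lt_iff₀ h2π]
      push_cast
      linarith
    have hktoNat : (k.toNat : ℕ) ≤ N := by
      omega
    have hkcast : ((k.toNat : ℕ) : ℝ) = (k : ℝ) := by
      exact_mod_cast congrArg (Int.cast : ℤ → ℝ) (Int.toNat_of_nonneg hk0)
    refine ⟨N - k.toNat, Nat.sub_le _ _, ?_⟩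
    have hrep : (AddCircle.equivIco (2 * π) 0 (((N * y : ℝ) : AddCircle (2 * π))) : ℝ)
        = Int.fract (N * y / (2 * π)) * (2 * π) :=
      AddCircle.coe_equivIco_mk_apply (2 * π) (N * y)
    have hfr : Int.fract (N * y / (2 * π)) * (2 * π) / N = y - 2 * π * (k.toNat : ℕ) / N := by
      rw [← Int.self_sub_floor, ← hkdef, hkcast]
      field_simp
    have harg : (((Int.fract (N * y / (2 * π)) * (2 * π) / N : ℝ)) : AddCircle (2 * π))
        = t + sc N (N - k.toNat) := by
      rw [hfr]
      have : ((y - 2 * π * (k.toNat : ℕ) / N : ℝ) : AddCircle (2 * π))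
          = ((y : ℝ) : AddCircle (2 * π)) - sc N k.toNat := rfl
      rw [this, hty, sub_eq_add_neg, neg_sc N _ hktoNat hNne]
    show w' _ = w' _
    rw [hNy]
    rw [show (AddCircle.equivIco (2 * π) 0 (((N * y : ℝ) : AddCircle (2 * π))) : ℝ) / N
          = Int.fract (N * y / (2 * π)) * (2 * π) / N by rw [hrep]]
    rw [harg]
  -- a.e. translate identities
  have hEa : ∀ a : ℕ, (fun t => w' (t + sc N a)) =ᵐ[volume] w := by
    intro a
    have htr : MeasurePreserving (fun t : AddCircle (2 * π) => t + sc N a) volume volume :=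
      measurePreserving_add_right volume (sc N a)
    have h1 : (fun t => w' (t + sc N a)) =ᵐ[volume] (fun t => w (t + sc N a)) := by
      have := MeasureTheory.ae_eq_comp (μ := volume) (f := fun t => t + sc N a)
        htr.measurable.aemeasurable (g := w') (g' := w) (by rw [htr.map_eq]; exact hww'.symm)
      exact this
    exact h1.trans (hinv a)
  have hae : ∀ᵐ t ∂(volume : Measure (AddCircle (2 * π))),
      ∀ a : Fin (N + 1), w' (t + sc N a) = w t := by
    rw [MeasureTheory.ae_all_iff]
    intro a
    exact hEa a
  have hfT : (fun t => fraw (N • t)) =ᵐ[volume] w := by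
    filter_upwards [hae] with t ht
    obtain ⟨a, haN, hfa⟩ := key t
    rw [hfa]
    exact ht ⟨a, by omega⟩
  have hmem : MemLp fraw 2 (volume : Measure (AddCircle (2 * π))) := by
    refine ⟨hfm, ?_⟩
    have h1 : eLpNorm fraw 2 (volume : Measure (AddCircle (2 * π)))
        = eLpNorm (fun t : AddCircle (2 * π) => fraw (N • t)) 2 volume :=
      (eLpNorm_comp_measurePreserving hfm hT).symm
    rw [h1, eLpNorm_congr_ae hfT]
    exact hw.2
  refine ⟨hmem.toLp fraw, ?_⟩
  have h3 : ⇑(hmem.toLp fraw) =ᵐ[volume] fraw := hmem.coeFn_toLp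
  have h2 := hT.quasiMeasurePreserving.ae_eq_comp h3
  exact h2.trans hfT

end Stmt5Aux

set_option maxHeartbeats 2000000

/-- If `m₀,…,m_{N−1} ∈ L^∞(𝕋)` (with `𝕋 = ℝ/2πℤ`) are such
that the matrix `N^{-1/2}(mⱼ(e^{2πik/N} z))_{j,k}` is a.e. unitary, then the
operators `(Sⱼf)(z) = mⱼ(z) f(z^N)` on `L²(𝕋)` satisfy the Cuntz relations
`Sⱼ*Sₖ = δ_{j,k}·Id` and `∑ⱼ SⱼSⱼ* = Id`. -/
theorem stmt5 (N : ℕ) (hN : 2 ≤ N)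
    (m : Fin N → AddCircle (2 * π) → ℂ)
    (hm : ∀ j, MemLp (m j) ⊤ (volume : Measure (AddCircle (2 * π))))
    (hunit : ∀ᵐ t : AddCircle (2 * π),
      (Matrix.of fun j k : Fin N =>
          ((Real.sqrt N : ℂ))⁻¹ * m j (t + ((2 * π * k / N : ℝ) : AddCircle (2 * π))))
        ∈ Matrix.unitaryGroup (Fin N) ℂ)
    (S : Fin N → (Lp ℂ 2 (volume : Measure (AddCircle (2 * π)))
      →L[ℂ] Lp ℂ 2 (volume : Measure (AddCircle (2 * π)))))
    (hS : ∀ j (f : Lp ℂ 2 (volume : Measure (AddCircle (2 * π)))),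
      ⇑(S j f) =ᵐ[volume] fun t => m j t * f (N • t)) :
    (∀ j k, ContinuousLinearMap.adjoint (S j) ∘L S k = if j = k then 1 else 0) ∧
    ∑ j, S j ∘L ContinuousLinearMap.adjoint (S j) = 1 := by
  classical
  haveI : NeZero N := ⟨by omega⟩
  have hNne : N ≠ 0 := by omega
  have hNR0 : (N : ℝ) ≠ 0 := Nat.cast_ne_zero.mpr hNne
  have hNC0 : (N : ℂ) ≠ 0 := Nat.cast_ne_zero.mpr hNne
  have hT : MeasurePreserving (fun t : AddCircle (2 * π) => N • t) volume volume :=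
    (AddCircle.ergodic_nsmul (T := 2 * π) (by omega : 1 < N)).toMeasurePreserving
  have htr : ∀ x : AddCircle (2 * π),
      MeasurePreserving (fun t : AddCircle (2 * π) => t + x) volume volume :=
    fun x => measurePreserving_add_right volume x
  have hTc : ∀ (l : ℕ) (t : AddCircle (2 * π)), N • (t + Stmt5Aux.sc N l) = N • t := by
    intro l t
    rw [smul_add, Stmt5Aux.nsmul_sc N l hNne, add_zero]
  -- multiplication by an `L^∞` function preserves `L^p`
  have hmulmem : ∀ (φ f : AddCircle (2 * π) → ℂ) (p : ℝ≥0∞),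
      MemLp φ ⊤ volume → MemLp f p volume → MemLp (fun t => φ t * f t) p volume := by
    intro φ f p hφ hf
    have := hf.smul (r := p) hφ
    simpa [Pi.smul_apply', smul_eq_mul, Pi.mul_def] using this
  have hconjmem : ∀ (h : AddCircle (2 * π) → ℂ) (p : ℝ≥0∞),
      MemLp h p volume → MemLp (fun t => conj (h t)) p volume := by
    intro h p hh
    refine ⟨?_, ?_⟩
    · exact continuous_star.comp_aestronglyMeasurable hh.1
    · have := eLpNorm_congr_norm_ae (μ := volume) (p := p)
        (f := fun t => conj (h t)) (g := h)
        (Filter.Eventually.of_forall fun t => by simp)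
      rw [this]
      exact hh.2
  -- constants in the unitarity relation
  have hsqrt : ((Real.sqrt N : ℝ) : ℂ) * ((Real.sqrt N : ℝ) : ℂ) = (N : ℂ) := by
    rw [← Complex.ofReal_mul, Real.mul_self_sqrt (Nat.cast_nonneg N)]
    norm_cast
  have hconst : ∀ x y : ℂ,
      ((Real.sqrt N : ℂ))⁻¹ * x * conj (((Real.sqrt N : ℂ))⁻¹ * y)
        = (N : ℂ)⁻¹ * (x * conj y) := by
    intro x y
    calc ((Real.sqrt N : ℂ))⁻¹ * x * conj (((Real.sqrt N : ℂ))⁻¹ * y)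
        = (((Real.sqrt N : ℂ))⁻¹ * ((Real.sqrt N : ℂ))⁻¹) * (x * conj y) := by
          rw [map_mul, map_inv₀, Complex.conj_ofReal]; ring
      _ = (N : ℂ)⁻¹ * (x * conj y) := by rw [← mul_inv, hsqrt]
  have hconst2 : ∀ x y : ℂ,
      conj (((Real.sqrt N : ℂ))⁻¹ * x) * (((Real.sqrt N : ℂ))⁻¹ * y)
        = (N : ℂ)⁻¹ * (conj x * y) := by
    intro x y
    calc conj (((Real.sqrt N : ℂ))⁻¹ * x) * (((Real.sqrt N : ℂ))⁻¹ * y)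
        = (((Real.sqrt N : ℂ))⁻¹ * ((Real.sqrt N : ℂ))⁻¹) * (conj x * y) := by
          rw [map_mul, map_inv₀, Complex.conj_ofReal]; ring
      _ = (N : ℂ)⁻¹ * (conj x * y) := by rw [← mul_inv, hsqrt]
  -- the rows of the matrix are orthonormal
  have hrow : ∀ j k : Fin N, ∀ᵐ t ∂(volume : Measure (AddCircle (2 * π))),
      (∑ l : Fin N, m j (t + Stmt5Aux.sc N (l : ℕ)) * conj (m k (t + Stmt5Aux.sc N (l : ℕ))))
        = if j = k then (N : ℂ) else 0 := by
    intro j k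
    filter_upwards [hunit] with t ht
    have h1 := Matrix.mem_unitaryGroup_iff.mp ht
    have h2 : ((Matrix.of fun j k : Fin N =>
          ((Real.sqrt N : ℂ))⁻¹ * m j (t + ((2 * π * k / N : ℝ) : AddCircle (2 * π)))) *
        star (Matrix.of fun j k : Fin N =>
          ((Real.sqrt N : ℂ))⁻¹ * m j (t + ((2 * π * k / N : ℝ) : AddCircle (2 * π))))) j k
        = (1 : Matrix (Fin N) (Fin N) ℂ) j k := by rw [h1]
    rw [Matrix.mul_apply, Matrix.one_apply] at h2
    have h3 : (∑ l : Fin N, (N : ℂ)⁻¹ *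
        (m j (t + Stmt5Aux.sc N (l : ℕ)) * conj (m k (t + Stmt5Aux.sc N (l : ℕ)))))
        = if j = k then 1 else 0 := by
      rw [← h2]
      refine Finset.sum_congr rfl fun l _ => ?_
      rw [Matrix.star_apply, Matrix.of_apply, Matrix.of_apply]
      exact (hconst _ _).symm
    rw [← Finset.mul_sum] at h3
    have h4 := congrArg (fun z => (N : ℂ) * z) h3
    rw [← mul_assoc, mul_inv_cancel₀ hNC0, one_mul] at h4
    rw [h4]
    split_ifs <;> simp
  -- the columns of the matrix are orthonormal (against the 0-th column)
  have hcol0 : ∀ l : Fin N, ∀ᵐ t ∂(volume : Measure (AddCircle (2 * π))),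
      (∑ j : Fin N, m j t * conj (m j (t + Stmt5Aux.sc N (l : ℕ))))
        = if l = 0 then (N : ℂ) else 0 := by
    intro l
    filter_upwards [hunit] with t ht
    have h1 := Matrix.mem_unitaryGroup_iff'.mp ht
    have h2 : (star (Matrix.of fun j k : Fin N =>
          ((Real.sqrt N : ℂ))⁻¹ * m j (t + ((2 * π * k / N : ℝ) : AddCircle (2 * π)))) *
        (Matrix.of fun j k : Fin N =>
          ((Real.sqrt N : ℂ))⁻¹ * m j (t + ((2 * π * k / N : ℝ) : AddCircle (2 * π))))) 0 l
        = (1 : Matrix (Fin N) (Fin N) ℂ) 0 l := by rw [h1]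
    rw [Matrix.mul_apply, Matrix.one_apply] at h2
    have hpt0 : t + Stmt5Aux.sc N (((0 : Fin N) : ℕ)) = t := by
      have : Stmt5Aux.sc N (((0 : Fin N) : ℕ)) = 0 := by
        simp [Stmt5Aux.sc_zero]
      rw [this, add_zero]
    have h3 : (∑ j : Fin N, (N : ℂ)⁻¹ *
        (conj (m j t) * m j (t + Stmt5Aux.sc N (l : ℕ))))
        = if (0 : Fin N) = l then 1 else 0 := by
      rw [← h2]
      refine Finset.sum_congr rfl fun x _ => ?_
      rw [Matrix.star_apply, Matrix.of_apply, Matrix.of_apply]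
      rw [show conj (m x t) = conj (m x (t + Stmt5Aux.sc N (((0 : Fin N) : ℕ)))) by rw [hpt0]]
      exact (hconst2 _ _).symm
    rw [← Finset.mul_sum] at h3
    have h4 := congrArg (fun z => (N : ℂ) * z) h3
    rw [← mul_assoc, mul_inv_cancel₀ hNC0, one_mul] at h4
    have h5 := congrArg conj h4
    rw [map_sum] at h5
    have h6 : (∑ j : Fin N, m j t * conj (m j (t + Stmt5Aux.sc N (l : ℕ))))
        = conj ((N : ℂ) * if (0 : Fin N) = l then 1 else 0) := by
      rw [← h5]
      refine Finset.sum_congr rfl fun x _ => ?_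
      rw [map_mul, Complex.conj_conj]
    rw [h6, map_mul, Complex.conj_natCast]
    by_cases hl : l = 0
    · simp [hl]
    · have hl' : ¬((0 : Fin N) = l) := fun h => hl h.symm
      simp [hl, hl']
  -- the key integral identity
  have hkey : ∀ (φ ψ : AddCircle (2 * π) → ℂ), MemLp φ ⊤ volume → Integrable ψ volume →
      ∀ d : ℂ, (∀ᵐ t ∂(volume : Measure (AddCircle (2 * π))),
          (∑ l : Fin N, φ (t + Stmt5Aux.sc N (l : ℕ))) = (N : ℂ) * d) →
      ∫ t, φ t * ψ (N • t) ∂volume = d * ∫ s, ψ s ∂volume := by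
    intro φ ψ hφ hψ d hd
    have hψT : Integrable (fun t : AddCircle (2 * π) => ψ (N • t)) volume :=
      (hT.integrable_comp hψ.aestronglyMeasurable).mpr hψ
    have hF : Integrable (fun t : AddCircle (2 * π) => φ t * ψ (N • t)) volume := by
      have := hψT.smul_of_top_right hφ
      simpa [Pi.smul_apply', smul_eq_mul, Pi.mul_def] using this
    have hFl : ∀ l : Fin N,
        Integrable (fun t : AddCircle (2 * π) => φ (t + Stmt5Aux.sc N (l : ℕ)) * ψ (N • t))
          volume := by
      intro l
      have h1 : Integrable ((fun t : AddCircle (2 * π) => φ t * ψ (N • t)) ∘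
          (fun t => t + Stmt5Aux.sc N (l : ℕ))) volume :=
        ((htr _).integrable_comp hF.aestronglyMeasurable).mpr hF
      refine h1.congr (Filter.Eventually.of_forall fun t => ?_)
      show φ (t + Stmt5Aux.sc N (l : ℕ)) * ψ (N • (t + Stmt5Aux.sc N (l : ℕ)))
          = φ (t + Stmt5Aux.sc N (l : ℕ)) * ψ (N • t)
      rw [hTc]
    have step1 : ∀ l : Fin N, ∫ t, φ (t + Stmt5Aux.sc N (l : ℕ)) * ψ (N • t) ∂volume
        = ∫ t, φ t * ψ (N • t) ∂volume := by
      intro l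
      have h1 := integral_add_right_eq_self (μ := (volume : Measure (AddCircle (2 * π))))
        (fun t : AddCircle (2 * π) => φ t * ψ (N • t)) (Stmt5Aux.sc N (l : ℕ))
      rw [← h1]
      refine integral_congr_ae (Filter.Eventually.of_forall fun t => ?_)
      show φ (t + Stmt5Aux.sc N (l : ℕ)) * ψ (N • t)
          = φ (t + Stmt5Aux.sc N (l : ℕ)) * ψ (N • (t + Stmt5Aux.sc N (l : ℕ)))
      rw [hTc]
    have step2 : (N : ℂ) * ∫ t, φ t * ψ (N • t) ∂volume
        = ∫ t, (∑ l : Fin N, φ (t + Stmt5Aux.sc N (l : ℕ))) * ψ (N • t) ∂volume := by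
      have h1 : ∫ t, (∑ l : Fin N, φ (t + Stmt5Aux.sc N (l : ℕ))) * ψ (N • t) ∂volume
          = ∑ l : Fin N, ∫ t, φ (t + Stmt5Aux.sc N (l : ℕ)) * ψ (N • t) ∂volume := by
        simp_rw [Finset.sum_mul]
        exact integral_finset_sum _ (fun l _ => hFl l)
      rw [h1]
      simp_rw [step1]
      rw [Finset.sum_const, Finset.card_univ, Fintype.card_fin, nsmul_eq_mul]
    have step3 : ∫ t, (∑ l : Fin N, φ (t + Stmt5Aux.sc N (l : ℕ))) * ψ (N • t) ∂volume
        = ∫ t, ((N : ℂ) * d) * ψ (N • t) ∂volume :=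
      integral_congr_ae (hd.mono fun t ht => by
        show (∑ l : Fin N, φ (t + Stmt5Aux.sc N (l : ℕ))) * ψ (N • t)
            = ((N : ℂ) * d) * ψ (N • t)
        rw [ht])
    have step4 : ∫ t, ψ (N • t) ∂(volume : Measure (AddCircle (2 * π)))
        = ∫ s, ψ s ∂volume := by
      have h1 : ∫ t, ψ (N • t) ∂(volume : Measure (AddCircle (2 * π)))
          = ∫ s, ψ s ∂(Measure.map (fun t : AddCircle (2 * π) => N • t) volume) :=
        (integral_map hT.measurable.aemeasurable
          (by rw [hT.map_eq]; exact hψ.aestronglyMeasurable)).symm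
      rw [h1, hT.map_eq]
    apply mul_left_cancel₀ hNC0
    rw [step2, step3, integral_const_mul, step4]
    ring
  -- Part 1: S_j^* S_k = δ_{jk}
  have part1 : ∀ j k, ContinuousLinearMap.adjoint (S j) ∘L S k = if j = k then 1 else 0 := by
    intro j k
    refine ContinuousLinearMap.ext fun f => ?_
    refine ext_inner_right ℂ fun g => ?_
    rw [ContinuousLinearMap.comp_apply, ContinuousLinearMap.adjoint_inner_left]
    have hint : ⟪S k f, S j g⟫_ℂ = ∫ t, (fun t => conj (m k t) * m j t) t *
        (fun s => conj (f s) * g s) (N • t) ∂volume := by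
      rw [MeasureTheory.L2.inner_def]
      refine integral_congr_ae ?_
      filter_upwards [hS k f, hS j g] with t h1 h2
      simp only [RCLike.inner_apply, h1, h2, map_mul]
      ring
    have hφmem : MemLp (fun t => conj (m k t) * m j t) ⊤ volume :=
      hmulmem _ _ ⊤ (hconjmem _ ⊤ (hm k)) (hm j)
    have hψint : Integrable (fun s : AddCircle (2 * π) => conj (f s) * g s) volume := by
      simpa [RCLike.inner_apply, mul_comm] using MeasureTheory.L2.integrable_inner (𝕜 := ℂ) f g
    have hd : ∀ᵐ t ∂(volume : Measure (AddCircle (2 * π))),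
        (∑ l : Fin N, (fun t => conj (m k t) * m j t) (t + Stmt5Aux.sc N (l : ℕ)))
          = (N : ℂ) * (if j = k then 1 else 0) := by
      filter_upwards [hrow j k] with t ht
      show (∑ l : Fin N, conj (m k (t + Stmt5Aux.sc N (l : ℕ))) * m j (t + Stmt5Aux.sc N (l : ℕ)))
          = (N : ℂ) * (if j = k then 1 else 0)
      rw [show (∑ l : Fin N, conj (m k (t + Stmt5Aux.sc N (l : ℕ))) *
          m j (t + Stmt5Aux.sc N (l : ℕ)))
          = (∑ l : Fin N, m j (t + Stmt5Aux.sc N (l : ℕ)) *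
            conj (m k (t + Stmt5Aux.sc N (l : ℕ)))) from
        Finset.sum_congr rfl fun l _ => mul_comm _ _]
      rw [ht]
      split_ifs <;> simp
    have hmain := hkey _ _ hφmem hψint (if j = k then 1 else 0) hd
    rw [hint, hmain]
    have hfg : ∫ s, conj (f s) * g s ∂(volume : Measure (AddCircle (2 * π))) = ⟪f, g⟫_ℂ := by
      rw [MeasureTheory.L2.inner_def]
      refine integral_congr_ae (Filter.Eventually.of_forall fun s => ?_)
      simp [RCLike.inner_apply, mul_comm]
    rw [hfg]
    split_ifs with h
    · simp [ContinuousLinearMap.one_apply]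
    · simp
  refine ⟨part1, ?_⟩
  -- Part 2: completeness
  refine ContinuousLinearMap.ext fun g => ?_
  set w : Fin N → AddCircle (2 * π) → ℂ := fun j t =>
    (N : ℂ)⁻¹ * ∑ l : Fin N, conj (m j (t + Stmt5Aux.sc N (l : ℕ))) * g (t + Stmt5Aux.sc N (l : ℕ))
    with hwdef
  have hwmem : ∀ j, MemLp (w j) 2 volume := by
    intro j
    apply MemLp.const_mul
    have hterm : ∀ l : Fin N, MemLp (fun t : AddCircle (2 * π) =>
        conj (m j (t + Stmt5Aux.sc N (l : ℕ))) * g (t + Stmt5Aux.sc N (l : ℕ))) 2 volume := by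
      intro l
      apply hmulmem
      · apply hconjmem
        have := (hm j).comp_measurePreserving (htr (Stmt5Aux.sc N (l : ℕ)))
        simpa [Function.comp_def] using this
      · have := (Lp.memLp g).comp_measurePreserving (htr (Stmt5Aux.sc N (l : ℕ)))
        simpa [Function.comp_def] using this
    simpa using memLp_finset_sum Finset.univ (fun l _ => hterm l)
  have hwinv : ∀ j (k : ℕ), (fun t => w j (t + Stmt5Aux.sc N k)) =ᵐ[volume] w j := by
    intro j k
    refine Filter.Eventually.of_forall fun t => ?_
    simp only [hwdef]
    congr 1
    have hNpos : 0 < N := by omega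
    set k' : Fin N := ⟨k % N, Nat.mod_lt _ hNpos⟩ with hk'
    have hpt : ∀ l : Fin N, t + Stmt5Aux.sc N k + Stmt5Aux.sc N (l : ℕ)
        = t + Stmt5Aux.sc N (((k' + l : Fin N) : ℕ)) := by
      intro l
      rw [add_assoc]
      congr 1
      rw [Fin.val_add, Stmt5Aux.sc_mod N _ hNne, Stmt5Aux.sc_add]
      rw [show (k' : ℕ) = k % N from rfl, Stmt5Aux.sc_mod N k hNne]
    calc (∑ l : Fin N, conj (m j (t + Stmt5Aux.sc N k + Stmt5Aux.sc N (l : ℕ))) *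
          g (t + Stmt5Aux.sc N k + Stmt5Aux.sc N (l : ℕ)))
        = ∑ l : Fin N, (fun x : Fin N => conj (m j (t + Stmt5Aux.sc N ((x : ℕ)))) *
            g (t + Stmt5Aux.sc N ((x : ℕ)))) ((Equiv.addLeft k') l) := by
          refine Finset.sum_congr rfl fun l _ => ?_
          simp only [Equiv.coe_addLeft]
          rw [hpt l]
      _ = ∑ l : Fin N, conj (m j (t + Stmt5Aux.sc N ((l : ℕ)))) *
            g (t + Stmt5Aux.sc N ((l : ℕ))) :=
          Equiv.sum_comp (Equiv.addLeft k') (fun x : Fin N =>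
            conj (m j (t + Stmt5Aux.sc N ((x : ℕ)))) * g (t + Stmt5Aux.sc N ((x : ℕ))))
  choose F hF using fun j => Stmt5Aux.descend N hN (w j) (hwmem j) (hwinv j)
  have halg : ∀ (a : Fin N → ℂ) (cjl : Fin N → Fin N → ℂ) (gl : Fin N → ℂ),
      (∑ j : Fin N, a j * ((N : ℂ)⁻¹ * ∑ l : Fin N, cjl j l * gl l))
        = (N : ℂ)⁻¹ * ∑ l : Fin N, (∑ j : Fin N, a j * cjl j l) * gl l := by
    intro a cjl gl
    calc (∑ j : Fin N, a j * ((N : ℂ)⁻¹ * ∑ l : Fin N, cjl j l * gl l))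
        = ∑ j : Fin N, ∑ l : Fin N, (N : ℂ)⁻¹ * (a j * cjl j l * gl l) := by
          refine Finset.sum_congr rfl fun j _ => ?_
          rw [Finset.mul_sum, Finset.mul_sum]
          exact Finset.sum_congr rfl fun l _ => by ring
      _ = ∑ l : Fin N, ∑ j : Fin N, (N : ℂ)⁻¹ * (a j * cjl j l * gl l) := Finset.sum_comm
      _ = (N : ℂ)⁻¹ * ∑ l : Fin N, (∑ j : Fin N, a j * cjl j l) * gl l := by
          rw [Finset.mul_sum]
          refine Finset.sum_congr rfl fun l _ => ?_
          rw [Finset.sum_mul, Finset.mul_sum]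
  have hdecomp : (∑ j : Fin N, S j (F j)) = g := by
    apply MeasureTheory.Lp.ext (p := (2 : ℝ≥0∞)) (μ := (volume : Measure (AddCircle (2 * π))))
    have h0 := Stmt5Aux.coeFn_sum Finset.univ (fun j : Fin N => S j (F j))
    have h1 : ∀ᵐ t ∂(volume : Measure (AddCircle (2 * π))), ∀ j : Fin N,
        (S j (F j)) t = m j t * (F j) (N • t) :=
      MeasureTheory.ae_all_iff.mpr fun j => hS j (F j)
    have h2 : ∀ᵐ t ∂(volume : Measure (AddCircle (2 * π))), ∀ j : Fin N,
        (F j : AddCircle (2 * π) → ℂ) (N • t) = w j t :=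
      MeasureTheory.ae_all_iff.mpr fun j => hF j
    have h3 : ∀ᵐ t ∂(volume : Measure (AddCircle (2 * π))), ∀ l : Fin N,
        (∑ j : Fin N, m j t * conj (m j (t + Stmt5Aux.sc N (l : ℕ))))
          = if l = 0 then (N : ℂ) else 0 :=
      MeasureTheory.ae_all_iff.mpr hcol0
    filter_upwards [h0, h1, h2, h3] with t ht0 ht1 ht2 ht3
    rw [ht0]
    have hstep : (∑ j : Fin N, (S j (F j)) t) = ∑ j : Fin N, m j t * w j t := by
      refine Finset.sum_congr rfl fun j _ => ?_
      rw [ht1 j, ht2 j]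
    rw [hstep]
    simp only [hwdef]
    rw [halg (fun j => m j t)
      (fun j l => conj (m j (t + Stmt5Aux.sc N (l : ℕ))))
      (fun l => g (t + Stmt5Aux.sc N (l : ℕ)))]
    have hsum : (∑ l : Fin N, (∑ j : Fin N, m j t * conj (m j (t + Stmt5Aux.sc N (l : ℕ)))) *
        g (t + Stmt5Aux.sc N (l : ℕ)))
        = (N : ℂ) * g (t + Stmt5Aux.sc N (((0 : Fin N) : ℕ))) := by
      rw [Finset.sum_congr rfl fun l (_ : l ∈ Finset.univ) => by rw [ht3 l]]
      simp [ite_mul, Finset.sum_ite_eq', Finset.mem_univ]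
    rw [hsum]
    have hpt0 : t + Stmt5Aux.sc N (((0 : Fin N) : ℕ)) = t := by
      have : Stmt5Aux.sc N (((0 : Fin N) : ℕ)) = 0 := by simp [Stmt5Aux.sc_zero]
      rw [this, add_zero]
    rw [hpt0, ← mul_assoc, inv_mul_cancel₀ hNC0, one_mul]
  have hadj : ∀ k : Fin N, ContinuousLinearMap.adjoint (S k) g = F k := by
    intro k
    have hite : ∀ j : Fin N,
        ((if k = j then (1 : Lp ℂ 2 (volume : Measure (AddCircle (2 * π)))
            →L[ℂ] Lp ℂ 2 (volume : Measure (AddCircle (2 * π)))) else 0)) (F j)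
          = if k = j then F j else 0 := by
      intro j
      split_ifs <;> simp
    calc ContinuousLinearMap.adjoint (S k) g
        = ∑ j : Fin N, ContinuousLinearMap.adjoint (S k) (S j (F j)) := by
          rw [← hdecomp, map_sum]
      _ = ∑ j : Fin N, (if k = j then (1 : Lp ℂ 2 (volume : Measure (AddCircle (2 * π)))
            →L[ℂ] Lp ℂ 2 (volume : Measure (AddCircle (2 * π)))) else 0) (F j) := by
          refine Finset.sum_congr rfl fun j _ => ?_
          rw [← ContinuousLinearMap.comp_apply, part1 k j]
      _ = F k := by
          rw [Finset.sum_congr rfl fun j (_ : j ∈ Finset.univ) => hite j]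
          simp [Finset.sum_ite_eq]
  rw [ContinuousLinearMap.sum_apply, ContinuousLinearMap.one_apply]
  calc (∑ j : Fin N, (S j ∘L ContinuousLinearMap.adjoint (S j)) g)
      = ∑ j : Fin N, S j (F j) := by
        refine Finset.sum_congr rfl fun j _ => ?_
        rw [ContinuousLinearMap.comp_apply, hadj j]
    _ = g := hdecomp
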